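/- If a fine bilinear form a_f satisfies the inherited-form identity a_c(u_c, v_c) = a_f(I u_c, I v_c) for a coarse bilinear form a_c, and both forms are represented by matrices via a_f(u,v) = uᵀ M_f A_f v and a_c(u,v) = uᵀ M_c A_c v with M_c = Iᵀ M_f I invertible, then A_c = R A_f I where R = M_c⁻¹ Iᵀ M_f. (Geometric rediscretization of SIP equals Galerkin coarsening.) -/

import Mathlib

open Matrix

lemma aux_galerkin {nc nf : ℕ} (I : Matrix (Fin nf) (Fin nc) ℝ)
    (B : Matrix (Fin nf) (Fin nf) ℝ) (u v : Fin nc → ℝ) :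
    (I.mulVec u) ⬝ᵥ (B.mulVec (I.mulVec v)) = u ⬝ᵥ ((Iᵀ * B * I).mulVec v) := by
  rw [mulVec_mulVec, dotProduct_mulVec, dotProduct_mulVec, ← vecMul_transpose,
    vecMul_vecMul, Matrix.mul_assoc]

lemma aux_ext {nc : ℕ} (X Y : Matrix (Fin nc) (Fin nc) ℝ)
    (h : ∀ u v : Fin nc → ℝ, u ⬝ᵥ (X.mulVec v) = u ⬝ᵥ (Y.mulVec v)) : X = Y := by
  ext i j
  have := h (Pi.single i 1) (Pi.single j 1)
  simpa [mulVec_single, Pi.single_apply, dotProduct] using this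

/-- If a coarse bilinear form is inherited from the fine one,
`uᵀ M_c A_c v = (Iu)ᵀ M_f A_f (Iv)` for all `u, v`, with `M_c = Iᵀ M_f I`, then
`A_c = R A_f I` where `R = M_c⁻¹ Iᵀ M_f`: geometric rediscretization equals Galerkin
coarsening. -/
theorem inherited_form_eq_galerkin_coarsening {nc nf : ℕ}
    (Mf : Matrix (Fin nf) (Fin nf) ℝ) (hMf : Mf.PosDef)
    (I : Matrix (Fin nf) (Fin nc) ℝ) (hI : Function.Injective I.mulVec)
    (Af : Matrix (Fin nf) (Fin nf) ℝ) (Ac : Matrix (Fin nc) (Fin nc) ℝ)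
    (hform : ∀ u v : Fin nc → ℝ,
      u ⬝ᵥ (((Iᵀ * Mf * I) * Ac).mulVec v) =
        (I.mulVec u) ⬝ᵥ ((Mf * Af).mulVec (I.mulVec v))) :
    Ac = ((Iᵀ * Mf * I)⁻¹ * Iᵀ * Mf) * Af * I := by
  have hmat : (Iᵀ * Mf * I) * Ac = Iᵀ * (Mf * Af) * I := by
    refine aux_ext _ _ fun u v => ?_
    rw [hform, aux_galerkin]
  have hMc : (Iᵀ * Mf * I).PosDef := by
    refine Matrix.PosDef.of_dotProduct_mulVec_pos ?_ ?_
    · have := (hMf.posSemidef.conjTranspose_mul_mul_same I).1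
      simpa using this
    · intro x hx
      have hIx : I.mulVec x ≠ 0 := fun h => hx (hI (by simpa using h))
      have h2 := hMf.dotProduct_mulVec_pos hIx
      simp only [star_trivial] at h2 ⊢
      rw [← aux_galerkin I Mf x x]
      simpa using h2
  have hunit : IsUnit (Iᵀ * Mf * I) := hMc.isUnit
  calc Ac = (Iᵀ * Mf * I)⁻¹ * ((Iᵀ * Mf * I) * Ac) := by
        rw [← Matrix.mul_assoc, Matrix.nonsing_inv_mul _ (isUnit_iff_isUnit_det _ |>.1 hunit),
          Matrix.one_mul]
    _ = ((Iᵀ * Mf * I)⁻¹ * Iᵀ * Mf) * Af * I := by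
        rw [hmat]; simp only [Matrix.mul_assoc]
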